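/- Let μ be an even finite Borel measure on ℝⁿ not concentrated on any linear subspace (so ∫|⟨x,u⟩| dμ > c_μ > 0 for all unit u), let φ: ℝⁿ → ℝ ∪ {+∞} be an even nonnegative convex function with φ(o) = 0, and suppose 𝓘_α(e^{-φ*}) ≥ τ. Then ∫_{ℝⁿ} φ dμ ≥ (c_μ/2)·(𝓘_α(e^{-φ*})/(e²𝓘_α(e^{-|·|})))^{1/(n+α)} − μ(ℝⁿ). -/

import Mathlib

open MeasureTheory Real Filter
open scoped Topology ENNReal NNReal

noncomputable section

abbrev En (n : ℕ) : Type := EuclideanSpace ℝ (Fin n)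

/-- Log-concavity in multiplicative form (handles zeros of `f`). -/
def IsLogConcave {n : ℕ} (f : En n → ℝ) : Prop :=
  ∀ (x y : En n) (t : ℝ), 0 ≤ t → t ≤ 1 →
    f x ^ (1 - t) * f y ^ t ≤ f ((1 - t) • x + t • y)

/-- Membership in the class `LCₙ`: upper semi-continuous log-concave functions with
nonzero finite total mass. -/
def MemLC {n : ℕ} (f : En n → ℝ) : Prop :=
  (∀ x, 0 ≤ f x) ∧ UpperSemicontinuous f ∧ IsLogConcave f ∧
    Integrable f ∧ 0 < ∫ x, f x

/-- The Riesz `α`-energy `𝓘_α(f) = ∫∫ f(x) f(y) |x-y|^{α-n} dx dy`. -/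
def rieszEnergy (n : ℕ) (α : ℝ) (f : En n → ℝ) : ℝ :=
  ∫ p : En n × En n, f p.1 * f p.2 * ‖p.1 - p.2‖ ^ (α - (n : ℝ))

/-- The Riesz `α`-potential `I_α(f,y) = ∫ f(x) |x-y|^{α-n} dx`. -/
def rieszPotential (n : ℕ) (α : ℝ) (f : En n → ℝ) (y : En n) : ℝ :=
  ∫ x, f x * ‖x - y‖ ^ (α - (n : ℝ))

/-- Legendre transform of an extended-real-valued function. -/
def erealConj {n : ℕ} (φ : En n → EReal) (y : En n) : EReal :=
  ⨆ x : En n, (((inner ℝ x y : ℝ) : EReal) + (-(φ x)))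

/-- `-log f`, valued `+∞` where `f` vanishes. -/
def nlog {n : ℕ} (f : En n → ℝ) : En n → EReal :=
  fun x => if f x = 0 then (⊤ : EReal) else ((- Real.log (f x) : ℝ) : EReal)

/-- `e^{-a}` for extended reals, with `e^{-∞} = 0`. -/
def expNeg : EReal → ℝ := fun a => if a = ⊤ then 0 else Real.exp (-(a.toReal))

/-- The support function `h_f = φ*` of a log-concave function `f = e^{-φ}`. -/
def suppConj {n : ℕ} (f : En n → ℝ) : En n → EReal := erealConj (nlog f)

/-- The Asplund sum `f ⊕ t•g = e^{-(φ* + tψ*)*}`. -/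
def asplund {n : ℕ} (f g : En n → ℝ) (t : ℝ) : En n → ℝ :=
  fun x => expNeg (erealConj (fun y => suppConj f y + (t : EReal) * suppConj g y) x)

/-- `δ𝓘_α(f,g) = D`, i.e. the one-sided limit `(1/2) lim_{t→0⁺} (𝓘_α(f⊕t•g)-𝓘_α(f))/t = D`. -/
def deltaRiesz (n : ℕ) (α : ℝ) (f g : En n → ℝ) (D : ℝ) : Prop :=
  Filter.Tendsto (fun t : ℝ => (rieszEnergy n α (asplund f g t) - rieszEnergy n α f) / (2 * t))
    (𝓝[>] (0:ℝ)) (𝓝 D)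

namespace Stmt17Aux

lemma coe_term (a b : ℝ) : ((a : EReal) + (-((b : ℝ) : EReal))) = (((a - b : ℝ)) : EReal) := by
  rw [← EReal.coe_neg, ← EReal.coe_add, sub_eq_add_neg]

variable {n : ℕ} {φ : En n → ℝ}

lemma conj_ge (y x : En n) :
    (((inner ℝ x y - φ x : ℝ)) : EReal) ≤ erealConj (fun x => ((φ x : ℝ) : EReal)) y := by
  rw [← coe_term]
  exact le_iSup (fun x : En n => ((inner ℝ x y : ℝ) : EReal) + (-((φ x : ℝ) : EReal))) x

lemma conj_le {y : En n} {s : ℝ} (h : ∀ x, (inner ℝ x y : ℝ) - φ x ≤ s) :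
    erealConj (fun x => ((φ x : ℝ) : EReal)) y ≤ (s : EReal) := by
  refine iSup_le fun x => ?_
  rw [coe_term]
  exact EReal.coe_le_coe_iff.mpr (h x)

lemma conj_nonneg (hφ0 : φ 0 = 0) (y : En n) :
    (0 : EReal) ≤ erealConj (fun x => ((φ x : ℝ) : EReal)) y := by
  have := conj_ge (φ := φ) y 0
  simpa [hφ0] using this

lemma expNeg_nonneg (a : EReal) : 0 ≤ expNeg a := by
  unfold expNeg
  split
  · exact le_refl 0
  · exact (Real.exp_pos _).le

lemma expNeg_coe (s : ℝ) : expNeg ((s : ℝ) : EReal) = Real.exp (-s) := by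
  unfold expNeg
  rw [if_neg (EReal.coe_ne_top s), EReal.toReal_coe]

lemma expNeg_le_one {a : EReal} (h : 0 ≤ a) : expNeg a ≤ 1 := by
  unfold expNeg
  split
  · exact zero_le_one
  · rename_i ha
    have hbot : a ≠ ⊥ := by
      intro hb; rw [hb] at h; exact absurd h (by simp)
    have : ((0 : ℝ) : EReal) ≤ ((a.toReal : ℝ) : EReal) := by
      rw [EReal.coe_toReal ha hbot]; exact_mod_cast h
    have h0 : (0 : ℝ) ≤ a.toReal := EReal.coe_le_coe_iff.mp this
    calc Real.exp (-(a.toReal)) ≤ Real.exp 0 := Real.exp_le_exp.mpr (by linarith)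
      _ = 1 := Real.exp_zero

end Stmt17Aux

open Stmt17Aux

set_option maxHeartbeats 2000000 in
/-- Lemma 6.3: lower bound for `∫ φ dμ` in terms of `𝓘_α(e^{-φ*})`. -/
theorem stmt17 {n : ℕ} (α : ℝ) (hα : 0 < α)
    (μ : Measure (En n)) [IsFiniteMeasure μ]
    (hμeven : μ.map (fun x => -x) = μ)
    (cμ : ℝ) (hcμ : 0 < cμ)
    (hμnc : ∀ u : En n, ‖u‖ = 1 → cμ < ∫ x, |(inner ℝ x u : ℝ)| ∂μ)
    (φ : En n → ℝ) (hconv : ConvexOn ℝ Set.univ φ)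
    (heven : ∀ x, φ (-x) = φ x) (hnn : ∀ x, 0 ≤ φ x) (hφ0 : φ 0 = 0)
    (hint : Integrable φ μ)
    (τ : ℝ)
    (hτ : τ ≤ rieszEnergy n α
      (fun y => expNeg (erealConj (fun x => ((φ x : ℝ) : EReal)) y))) :
    (cμ / 2) *
        (rieszEnergy n α (fun y => expNeg (erealConj (fun x => ((φ x : ℝ) : EReal)) y)) /
          (Real.exp 2 * rieszEnergy n α (fun x : En n => Real.exp (-‖x‖))))
          ^ (1 / ((n : ℝ) + α)) -
      (μ Set.univ).toReal
    ≤ ∫ x, φ x ∂μ := by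
  classical
  set f : En n → ℝ := fun y => expNeg (erealConj (fun x => ((φ x : ℝ) : EReal)) y) with hf
  set A := rieszEnergy n α f with hA
  set I0 := rieszEnergy n α (fun x : En n => Real.exp (-‖x‖)) with hI0
  have hφint : 0 ≤ ∫ x, φ x ∂μ := integral_nonneg hnn
  have hμ0 : 0 ≤ (μ Set.univ).toReal := ENNReal.toReal_nonneg
  have hna : (0 : ℝ) < (n : ℝ) + α := by positivity
  have hcne : (1 / ((n : ℝ) + α)) ≠ 0 := ne_of_gt (by positivity)
  have hfnn : ∀ z, 0 ≤ f z := fun z => expNeg_nonneg _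
  have hAnn : 0 ≤ A := by
    refine integral_nonneg fun p => ?_
    exact mul_nonneg (mul_nonneg (hfnn _) (hfnn _)) (Real.rpow_nonneg (norm_nonneg _) _)
  have hI0nn : 0 ≤ I0 := by
    refine integral_nonneg fun p => ?_
    exact mul_nonneg (mul_nonneg (Real.exp_pos _).le (Real.exp_pos _).le)
      (Real.rpow_nonneg (norm_nonneg _) _)
  rcases eq_or_lt_of_le hAnn with hA0 | hApos
  · rw [← hA0, zero_div, Real.zero_rpow hcne, mul_zero, zero_sub]
    linarith
  rcases eq_or_lt_of_le hI0nn with hI00 | hI0pos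
  · rw [← hI00, mul_zero, div_zero, Real.zero_rpow hcne, mul_zero, zero_sub]
    linarith
  -- main case
  have hBpos : 0 < Real.exp 2 * I0 := mul_pos (Real.exp_pos 2) hI0pos
  set ρ := (A / (Real.exp 2 * I0)) ^ (1 / ((n : ℝ) + α)) with hρ
  have hρpos : 0 < ρ := Real.rpow_pos_of_pos (div_pos hApos hBpos) _
  set r := ρ / 2 with hr'
  have hr : 0 < r := by positivity
  have key : ∃ y : En n, ‖y‖ = r ∧
      erealConj (fun x => ((φ x : ℝ) : EReal)) y ≤ ((1 : ℝ) : EReal) := by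
    by_contra hcon
    push_neg at hcon
    -- pointwise bound  f ≤ e·exp(-‖·‖/r)
    have hfg : ∀ z : En n, f z ≤ Real.exp 1 * Real.exp (-(‖z‖ / r)) := by
      intro z
      rcases le_or_gt ‖z‖ r with hz | hz
      · have h1 : f z ≤ 1 := expNeg_le_one (conj_nonneg hφ0 z)
        have h2 : Real.exp (-(1 : ℝ)) ≤ Real.exp (-(‖z‖ / r)) :=
          Real.exp_le_exp.mpr (by rw [neg_le_neg_iff]; exact (div_le_one hr).mpr hz)
        calc f z ≤ 1 := h1
          _ = Real.exp 1 * Real.exp (-(1 : ℝ)) := by rw [← Real.exp_add]; norm_num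
          _ ≤ Real.exp 1 * Real.exp (-(‖z‖ / r)) := by
              exact mul_le_mul_of_nonneg_left h2 (Real.exp_pos _).le
      · by_cases htop : erealConj (fun x => ((φ x : ℝ) : EReal)) z = ⊤
        · have hz0 : f z = 0 := by simp [hf, expNeg, htop]
          rw [hz0]; positivity
        · have hbot : erealConj (fun x => ((φ x : ℝ) : EReal)) z ≠ ⊥ := by
            intro hb
            have := conj_nonneg (φ := φ) hφ0 z
            rw [hb] at this; exact absurd this (by simp)
          set s := (erealConj (fun x => ((φ x : ℝ) : EReal)) z).toReal with hs'
          have hcoe : ((s : ℝ) : EReal) = erealConj (fun x => ((φ x : ℝ) : EReal)) z :=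
            EReal.coe_toReal htop hbot
          set t := r / ‖z‖ with ht'
          have hznorm : 0 < ‖z‖ := lt_trans hr hz
          have ht0 : 0 < t := div_pos hr hznorm
          have ht1 : t < 1 := (div_lt_one hznorm).mpr hz
          have hw : ‖t • z‖ = r := by
            rw [norm_smul, Real.norm_eq_abs, abs_of_pos ht0, ht']
            field_simp
          have hsc : erealConj (fun x => ((φ x : ℝ) : EReal)) (t • z) ≤ ((t * s : ℝ) : EReal) := by
            apply conj_le
            intro x
            have hx : (inner ℝ x z : ℝ) - φ x ≤ s := by
              have := conj_ge (φ := φ) z x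
              rw [← hcoe] at this
              exact EReal.coe_le_coe_iff.mp this
            have hin : (inner ℝ x (t • z) : ℝ) = t * (inner ℝ x z : ℝ) :=
              real_inner_smul_right x z t
            rw [hin]
            nlinarith [mul_nonneg (sub_nonneg.mpr ht1.le) (hnn x),
              mul_nonneg ht0.le (sub_nonneg.mpr hx)]
          have h1lt : ((1 : ℝ) : EReal) < ((t * s : ℝ) : EReal) :=
            lt_of_lt_of_le (hcon _ hw) hsc
          have hts : 1 < t * s := EReal.coe_lt_coe_iff.mp h1lt
          have hsbig : ‖z‖ / r < s := by
            have h1t : 1 / t < s := (div_lt_iff₀ ht0).mpr (by linarith [mul_comm t s])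
            have : (1 : ℝ) / t = ‖z‖ / r := by rw [ht']; field_simp
            linarith [this ▸ h1t]
          have hfz : f z = Real.exp (-s) := by
            rw [hf]; simp only; rw [← hcoe, expNeg_coe]
          rw [hfz]
          calc Real.exp (-s) ≤ Real.exp (-(‖z‖ / r)) :=
                Real.exp_le_exp.mpr (by linarith)
            _ ≤ Real.exp 1 * Real.exp (-(‖z‖ / r)) := by
                nlinarith [Real.exp_pos (-(‖z‖ / r)), Real.add_one_le_exp (1:ℝ)]
    -- integrability of the integrand of A
    have hFint : Integrable (fun p : En n × En n =>
        f p.1 * f p.2 * ‖p.1 - p.2‖ ^ (α - (n : ℝ))) := by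
      by_contra h
      have : A = 0 := by rw [hA, rieszEnergy, integral_undef h]
      exact absurd this hApos.ne'
    have hHint : Integrable (fun p : En n × En n =>
        Real.exp (-‖p.1‖) * Real.exp (-‖p.2‖) * ‖p.1 - p.2‖ ^ (α - (n : ℝ))) := by
      by_contra h
      have : I0 = 0 := by rw [hI0, rieszEnergy, integral_undef h]
      exact absurd this hI0pos.ne'
    haveI : (volume : Measure (En n × En n)).IsAddHaarMeasure :=
      Measure.prod.instIsAddHaarMeasure _ _
    set H : En n × En n → ℝ := fun q =>
      Real.exp (-‖q.1‖) * Real.exp (-‖q.2‖) * ‖q.1 - q.2‖ ^ (α - (n : ℝ)) with hH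
    have hrpow_pos : (0 : ℝ) < r ^ (α - (n : ℝ)) := Real.rpow_pos_of_pos hr _
    have hGeq : ∀ p : En n × En n,
        (Real.exp 1 * Real.exp (-(‖p.1‖ / r))) * (Real.exp 1 * Real.exp (-(‖p.2‖ / r)))
            * ‖p.1 - p.2‖ ^ (α - (n : ℝ))
          = Real.exp 2 * r ^ (α - (n : ℝ)) * H (r⁻¹ • p) := by
      intro p
      have h1 : ‖r⁻¹ • p.1‖ = ‖p.1‖ / r := by
        rw [norm_smul, Real.norm_eq_abs, abs_inv, abs_of_pos hr]
        rw [inv_mul_eq_div]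
      have h2 : ‖r⁻¹ • p.2‖ = ‖p.2‖ / r := by
        rw [norm_smul, Real.norm_eq_abs, abs_inv, abs_of_pos hr]
        rw [inv_mul_eq_div]
      have h3 : ‖r⁻¹ • p.1 - r⁻¹ • p.2‖ ^ (α - (n : ℝ))
          = (r ^ (α - (n : ℝ)))⁻¹ * ‖p.1 - p.2‖ ^ (α - (n : ℝ)) := by
        rw [← smul_sub, norm_smul, Real.norm_eq_abs, abs_inv, abs_of_pos hr,
          Real.mul_rpow (by positivity) (norm_nonneg _), Real.inv_rpow hr.le]
      rw [hH]
      simp only [Prod.smul_fst, Prod.smul_snd]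
      rw [h1, h2, h3]
      rw [show Real.exp 2 = Real.exp 1 * Real.exp 1 by rw [← Real.exp_add]; norm_num]
      field_simp
    have hGint : Integrable (fun p : En n × En n =>
        Real.exp 2 * r ^ (α - (n : ℝ)) * H (r⁻¹ • p)) :=
      (((integrable_comp_smul_iff volume H (inv_ne_zero hr.ne')).mpr hHint).const_mul _)
    have hmono : A ≤ ∫ p : En n × En n, Real.exp 2 * r ^ (α - (n : ℝ)) * H (r⁻¹ • p) := by
      rw [hA, rieszEnergy]
      refine integral_mono hFint hGint fun p => ?_
      rw [← hGeq p]
      have hp1 := hfg p.1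
      have hp2 := hfg p.2
      have hpow : (0:ℝ) ≤ ‖p.1 - p.2‖ ^ (α - (n : ℝ)) := Real.rpow_nonneg (norm_nonneg _) _
      have := mul_le_mul hp1 hp2 (hfnn p.2) (by positivity)
      exact mul_le_mul_of_nonneg_right this hpow
    have hval : ∫ p : En n × En n, Real.exp 2 * r ^ (α - (n : ℝ)) * H (r⁻¹ • p)
        = Real.exp 2 * r ^ ((n : ℝ) + α) * I0 := by
      rw [integral_const_mul]
      rw [Measure.integral_comp_inv_smul_of_nonneg volume H hr.le]
      have hfr : Module.finrank ℝ (En n × En n) = n + n := by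
        rw [Module.finrank_prod, finrank_euclideanSpace_fin]
      rw [hfr, smul_eq_mul, ← mul_assoc]
      have : r ^ (α - (n : ℝ)) * r ^ (n + n : ℕ) = r ^ ((n : ℝ) + α) := by
        rw [← Real.rpow_natCast r (n + n), ← Real.rpow_add hr]
        push_cast
        ring_nf
      rw [mul_assoc (Real.exp 2), this, hI0, rieszEnergy, mul_assoc]
    have hcontr : Real.exp 2 * r ^ ((n : ℝ) + α) * I0 < A := by
      have hhalf : r ^ ((n : ℝ) + α) = (1/2 : ℝ) ^ ((n : ℝ) + α) * ρ ^ ((n : ℝ) + α) := by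
        rw [← Real.mul_rpow (by norm_num) hρpos.le]
        congr 1
        rw [hr']; ring
      have hρpow : ρ ^ ((n : ℝ) + α) = A / (Real.exp 2 * I0) := by
        rw [hρ, one_div, Real.rpow_inv_rpow (by positivity) hna.ne']
      have hlt1 : (1/2 : ℝ) ^ ((n : ℝ) + α) < 1 :=
        Real.rpow_lt_one (by norm_num) (by norm_num) hna
      have heq : Real.exp 2 * r ^ ((n : ℝ) + α) * I0 = (1/2 : ℝ) ^ ((n : ℝ) + α) * A := by
        rw [hhalf, hρpow]
        field_simp
      rw [heq]
      nlinarith [Real.rpow_nonneg (by norm_num : (0:ℝ) ≤ 1/2) ((n : ℝ) + α)]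
    linarith [hmono, hval ▸ hmono]
  obtain ⟨y, hynorm, hyconj⟩ := key
  have hy0 : 0 < ‖y‖ := by rw [hynorm]; exact hr
  have hφlb : ∀ x, |(inner ℝ x y : ℝ)| - 1 ≤ φ x := by
    intro x
    have h1 : (inner ℝ x y : ℝ) - φ x ≤ 1 :=
      EReal.coe_le_coe_iff.mp ((conj_ge (φ := φ) y x).trans hyconj)
    have h2 : (inner ℝ (-x) y : ℝ) - φ (-x) ≤ 1 :=
      EReal.coe_le_coe_iff.mp ((conj_ge (φ := φ) y (-x)).trans hyconj)
    rw [inner_neg_left, heven] at h2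
    have : |(inner ℝ x y : ℝ)| ≤ φ x + 1 := abs_le.mpr ⟨by linarith, by linarith⟩
    linarith
  set u : En n := ‖y‖⁻¹ • y with hu'
  have hu : ‖u‖ = 1 := by
    rw [hu', norm_smul, Real.norm_eq_abs, abs_inv, abs_of_pos hy0]
    field_simp
  have hinner : ∀ x, |(inner ℝ x y : ℝ)| = ‖y‖ * |(inner ℝ x u : ℝ)| := by
    intro x
    rw [hu', real_inner_smul_right, abs_mul, abs_inv, abs_of_pos hy0]
    field_simp
  have hIy : Integrable (fun x => |(inner ℝ x y : ℝ)|) μ := by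
    refine Integrable.mono' (hint.add (integrable_const 1)) ?_ ?_
    · exact ((continuous_id.inner (continuous_const : Continuous fun _ : En n => y)).abs).aestronglyMeasurable
    · filter_upwards with x
      rw [Real.norm_eq_abs, abs_abs]
      simp only [Pi.add_apply]
      have := hφlb x; linarith
  have h1 : ∫ x, (|(inner ℝ x y : ℝ)| - 1) ∂μ ≤ ∫ x, φ x ∂μ := by
    refine integral_mono (hIy.sub (integrable_const 1)) hint fun x => ?_
    exact hφlb x
  have h2 : ∫ x, (|(inner ℝ x y : ℝ)| - 1) ∂μ
      = ‖y‖ * ∫ x, |(inner ℝ x u : ℝ)| ∂μ - (μ Set.univ).toReal := by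
    rw [integral_sub hIy (integrable_const 1), integral_const, smul_eq_mul, mul_one]
    congr 1
    simp_rw [hinner]
    exact integral_const_mul _ _
  have h3 : cμ < ∫ x, |(inner ℝ x u : ℝ)| ∂μ := hμnc u hu
  have h4 : ‖y‖ * cμ ≤ ‖y‖ * ∫ x, |(inner ℝ x u : ℝ)| ∂μ :=
    mul_le_mul_of_nonneg_left h3.le (norm_nonneg _)
  rw [hynorm] at h4 h2
  have : cμ / 2 * ρ = r * cμ := by rw [hr']; ring
  linarith
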